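/- Let p ∈ (1,∞) and let q̄ ∈ (0, q̄₁), where q̄₁ := sup_{b ∈ (0,∞)} [(p−1)/(b^{p−1}+1) + b/(b+1)]. Then there exists b ∈ (0,∞) with b ≠ 1 and a constant C > 0 (depending on p, b, q̄) such that for every integer N ≥ 2 the product Γ_N := ∏_{j=2}^{N} γ_j satisfies Γ_N ≤ C · N^{−q̄}. -/

import Mathlib

open Real

/-- `α_{i+1} = ((i+1)^{p−1} − i^{p−1})/((i+1)^{p−1} + b^{p−1} i^{p−1})`. -/
noncomputable def alphaCoef (p b : ℝ) (i : ℕ) : ℝ :=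
  (((i : ℝ) + 1) ^ (p - 1) - (i : ℝ) ^ (p - 1)) /
    (((i : ℝ) + 1) ^ (p - 1) + b ^ (p - 1) * (i : ℝ) ^ (p - 1))

/-- `β_{i+1} = (1 − α_{i+1}) · b/((b+1)(i+1))`. -/
noncomputable def betaCoef (p b : ℝ) (i : ℕ) : ℝ :=
  (1 - alphaCoef p b i) * (b / ((b + 1) * ((i : ℝ) + 1)))

/-- `γ_{i+1} = 1 − α_{i+1} − β_{i+1}`. -/
noncomputable def gammaCoef (p b : ℝ) (i : ℕ) : ℝ :=
  1 - alphaCoef p b i - betaCoef p b i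

section Aux

open Filter Topology

variable {p b : ℝ}

private lemma denom_pos (hp : 1 < p) (hb : 0 < b) (i : ℕ) :
    0 < ((i : ℝ) + 1) ^ (p - 1) + b ^ (p - 1) * (i : ℝ) ^ (p - 1) := by
  have h1 : (0:ℝ) < ((i : ℝ) + 1) ^ (p - 1) := by positivity
  have h2 : (0:ℝ) ≤ (i : ℝ) ^ (p - 1) := by positivity
  have h3 : (0:ℝ) < b ^ (p - 1) := by positivity
  nlinarith

private lemma alpha_nonneg (hp : 1 < p) (hb : 0 < b) (i : ℕ) : 0 ≤ alphaCoef p b i := by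
  apply div_nonneg _ (denom_pos hp hb i).le
  have : ((i : ℝ)) ^ (p - 1) ≤ ((i : ℝ) + 1) ^ (p - 1) :=
    Real.rpow_le_rpow (by positivity) (by linarith) (by linarith)
  linarith

private lemma alpha_le_one (hp : 1 < p) (hb : 0 < b) (i : ℕ) : alphaCoef p b i ≤ 1 := by
  rw [alphaCoef, div_le_one (denom_pos hp hb i)]
  have h2 : (0:ℝ) ≤ (i : ℝ) ^ (p - 1) := by positivity
  have h3 : (0:ℝ) < b ^ (p - 1) := by positivity
  nlinarith

private lemma alpha_lt_one (hp : 1 < p) (hb : 0 < b) {i : ℕ} (hi : 1 ≤ i) :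
    alphaCoef p b i < 1 := by
  rw [alphaCoef, div_lt_one (denom_pos hp hb i)]
  have hi0 : (0:ℝ) < (i : ℝ) := by exact_mod_cast hi
  have h2 : (0:ℝ) < (i : ℝ) ^ (p - 1) := by positivity
  have h3 : (0:ℝ) < b ^ (p - 1) := by positivity
  nlinarith

private lemma beta_nonneg (hp : 1 < p) (hb : 0 < b) (i : ℕ) : 0 ≤ betaCoef p b i := by
  have h1 := alpha_le_one hp hb i
  have : (0:ℝ) ≤ b / ((b + 1) * ((i : ℝ) + 1)) := by positivity
  have : (0:ℝ) ≤ 1 - alphaCoef p b i := by linarith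
  exact mul_nonneg this (by positivity)

private lemma gamma_factored (p b : ℝ) (i : ℕ) :
    gammaCoef p b i = (1 - alphaCoef p b i) * (1 - b / ((b + 1) * ((i : ℝ) + 1))) := by
  unfold gammaCoef betaCoef; ring

private lemma gamma_pos (hp : 1 < p) (hb : 0 < b) {i : ℕ} (hi : 1 ≤ i) :
    0 < gammaCoef p b i := by
  rw [gamma_factored]
  apply mul_pos (by linarith [alpha_lt_one hp hb (b := b) hi])
  have h : b / ((b + 1) * ((i : ℝ) + 1)) < 1 := by
    rw [div_lt_one (by positivity)]
    have hi0 : (0:ℝ) ≤ (i : ℝ) := by positivity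
    nlinarith
  linarith

private lemma gamma_le_one (hp : 1 < p) (hb : 0 < b) (i : ℕ) : gammaCoef p b i ≤ 1 := by
  have h1 := alpha_nonneg hp hb (b := b) i
  have h2 := beta_nonneg hp hb (b := b) i
  unfold gammaCoef; linarith

private lemma alpha_eq (hp : 1 < p) (hb : 0 < b) {i : ℕ} (hi : 1 ≤ i) :
    alphaCoef p b i =
      ((1 + 1 / (i : ℝ)) ^ (p - 1) - 1) / ((1 + 1 / (i : ℝ)) ^ (p - 1) + b ^ (p - 1)) := by
  have hi0 : (0:ℝ) < (i : ℝ) := by exact_mod_cast hi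
  have h1 : (1 + 1 / (i : ℝ)) = ((i : ℝ) + 1) / (i : ℝ) := by field_simp
  have h2 : (1 + 1 / (i : ℝ)) ^ (p - 1) = ((i : ℝ) + 1) ^ (p - 1) / (i : ℝ) ^ (p - 1) := by
    rw [h1, Real.div_rpow (by positivity) hi0.le]
  have hs : (0:ℝ) < (i : ℝ) ^ (p - 1) := by positivity
  have hd2 : (0:ℝ) < ((i : ℝ) + 1) ^ (p - 1) / (i : ℝ) ^ (p - 1) + b ^ (p - 1) := by
    have h3 : (0:ℝ) < ((i : ℝ) + 1) ^ (p - 1) := by positivity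
    have h4 : (0:ℝ) < b ^ (p - 1) := by positivity
    positivity
  rw [alphaCoef, h2, div_eq_div_iff (denom_pos hp hb i).ne' hd2.ne']
  field_simp

private lemma tendsto_one_add_inv :
    Tendsto (fun i : ℕ => 1 + 1 / (i : ℝ)) atTop (𝓝 1) := by
  have h0 : Tendsto (fun _ : ℕ => (1:ℝ)) atTop (𝓝 1) := tendsto_const_nhds
  simpa using h0.add tendsto_one_div_atTop_nhds_zero_nat

private lemma tendsto_rpow_one_add_inv (hp : 1 < p) :
    Tendsto (fun i : ℕ => (1 + 1 / (i : ℝ)) ^ (p - 1)) atTop (𝓝 1) := by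
  have hc : ContinuousAt (fun x : ℝ => x ^ (p - 1)) 1 :=
    Real.continuousAt_rpow_const 1 (p - 1) (Or.inl one_ne_zero)
  have := hc.tendsto.comp tendsto_one_add_inv
  simpa [Real.one_rpow, Function.comp_def] using this

private lemma tendsto_mul_alpha (hp : 1 < p) (hb : 0 < b) :
    Tendsto (fun i : ℕ => (i : ℝ) * alphaCoef p b i) atTop
      (𝓝 ((p - 1) / (1 + b ^ (p - 1)))) := by
  have hd : HasDerivAt (fun x : ℝ => x ^ (p - 1)) (p - 1) 1 := by
    have := Real.hasDerivAt_rpow_const (x := 1) (p := p - 1) (Or.inl one_ne_zero)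
    simpa [Real.one_rpow] using this
  have hmem : Tendsto (fun i : ℕ => 1 + 1 / (i : ℝ)) atTop (𝓝[≠] (1:ℝ)) := by
    rw [tendsto_nhdsWithin_iff]
    refine ⟨tendsto_one_add_inv, ?_⟩
    filter_upwards [Filter.eventually_ge_atTop 1] with i hi
    have hi0 : (0:ℝ) < (i : ℝ) := by exact_mod_cast hi
    have : (0:ℝ) < 1 / (i : ℝ) := by positivity
    simp only [Set.mem_compl_iff, Set.mem_singleton_iff]
    intro h
    nlinarith [h]
  have hslope : Tendsto
      (fun i : ℕ => slope (fun x : ℝ => x ^ (p - 1)) 1 (1 + 1 / (i : ℝ))) atTop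
      (𝓝 (p - 1)) :=
    (hasDerivAt_iff_tendsto_slope.1 hd).comp hmem
  have hden : Tendsto (fun i : ℕ => (1 + 1 / (i : ℝ)) ^ (p - 1) + b ^ (p - 1)) atTop
      (𝓝 (1 + b ^ (p - 1))) := (tendsto_rpow_one_add_inv hp).add tendsto_const_nhds
  have hne : (1 : ℝ) + b ^ (p - 1) ≠ 0 := by positivity
  have := hslope.div hden hne
  apply this.congr'
  filter_upwards [Filter.eventually_ge_atTop 1] with i hi
  have hi0 : (0:ℝ) < (i : ℝ) := by exact_mod_cast hi
  rw [alpha_eq hp hb hi]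
  simp only [Pi.div_apply]
  rw [slope_def_field]
  have h1 : (1 + 1 / (i : ℝ)) - 1 = 1 / (i : ℝ) := by ring
  rw [h1, Real.one_rpow, div_div]
  have hrb : (0:ℝ) < (1 + 1 / (i : ℝ)) ^ (p - 1) + b ^ (p - 1) := by
    have : (0:ℝ) < (1 + 1 / (i : ℝ)) ^ (p - 1) := by positivity
    have : (0:ℝ) < b ^ (p - 1) := by positivity
    positivity
  field_simp

private lemma tendsto_alpha_zero (hp : 1 < p) (hb : 0 < b) :
    Tendsto (fun i : ℕ => alphaCoef p b i) atTop (𝓝 0) := by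
  have h := (tendsto_mul_alpha hp hb).mul tendsto_one_div_atTop_nhds_zero_nat
  rw [mul_zero] at h
  apply h.congr'
  filter_upwards [Filter.eventually_ge_atTop 1] with i hi
  have hi0 : (i : ℝ) ≠ 0 := by
    have : (0:ℝ) < (i : ℝ) := by exact_mod_cast hi
    linarith
  field_simp

private lemma tendsto_div_add_one :
    Tendsto (fun i : ℕ => (i : ℝ) / ((i : ℝ) + 1)) atTop (𝓝 1) := by
  have h0 : Tendsto (fun _ : ℕ => (1:ℝ)) atTop (𝓝 1) := tendsto_const_nhds
  have h := h0.sub tendsto_one_div_add_atTop_nhds_zero_nat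
  rw [sub_zero] at h
  apply h.congr
  intro i
  have : ((i : ℝ) + 1) ≠ 0 := by positivity
  field_simp
  ring

private lemma tendsto_mul_beta (hp : 1 < p) (hb : 0 < b) :
    Tendsto (fun i : ℕ => (i : ℝ) * betaCoef p b i) atTop (𝓝 (b / (b + 1))) := by
  have h1 : Tendsto (fun i : ℕ => (1 - alphaCoef p b i) * ((i : ℝ) / ((i : ℝ) + 1))
      * (b / (b + 1))) atTop (𝓝 ((1 - 0) * 1 * (b / (b + 1)))) :=
    ((tendsto_const_nhds.sub (tendsto_alpha_zero hp hb)).mul tendsto_div_add_one).mul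
      tendsto_const_nhds
  rw [show ((1:ℝ) - 0) * 1 * (b / (b + 1)) = b / (b + 1) by ring] at h1
  apply h1.congr
  intro i
  have h2 : ((i : ℝ) + 1) ≠ 0 := by positivity
  have h3 : (b + 1) ≠ 0 := by positivity
  rw [betaCoef]
  field_simp

private lemma tendsto_mul_sum (hp : 1 < p) (hb : 0 < b) :
    Tendsto (fun i : ℕ => (i : ℝ) * (alphaCoef p b i + betaCoef p b i)) atTop
      (𝓝 ((p - 1) / (b ^ (p - 1) + 1) + b / (b + 1))) := by
  have h := (tendsto_mul_alpha hp hb).add (tendsto_mul_beta hp hb)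
  rw [show (1:ℝ) + b ^ (p - 1) = b ^ (p - 1) + 1 by ring] at h
  apply h.congr
  intro i; ring

private lemma gamma_rpow_bound (hp : 1 < p) (hb : 0 < b) {qbar : ℝ} (hq : 0 < qbar)
    {i : ℕ} (hi : 1 ≤ i)
    (h : qbar ≤ (i : ℝ) * (alphaCoef p b i + betaCoef p b i)) :
    gammaCoef p b i ≤ ((i : ℝ) / ((i : ℝ) + 1)) ^ qbar := by
  have hi0 : (0:ℝ) < (i : ℝ) := by exact_mod_cast hi
  have h1 : gammaCoef p b i ≤ 1 - qbar / (i : ℝ) := by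
    rw [gammaCoef]
    have : qbar / (i : ℝ) ≤ alphaCoef p b i + betaCoef p b i := by
      rw [div_le_iff₀ hi0]; linarith [h]
    linarith
  have h2 : (1:ℝ) - qbar / (i : ℝ) ≤ Real.exp (-(qbar / (i : ℝ))) := by
    have := Real.add_one_le_exp (-(qbar / (i : ℝ)))
    linarith
  have h3 : Real.exp (-(qbar / (i : ℝ))) ≤ ((i : ℝ) / ((i : ℝ) + 1)) ^ qbar := by
    rw [Real.rpow_def_of_pos (by positivity)]
    apply Real.exp_le_exp.2
    have hlog1 : Real.log (((i : ℝ) + 1) / (i : ℝ)) ≤ 1 / (i : ℝ) := by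
      have ha := Real.log_le_sub_one_of_pos (show (0:ℝ) < ((i : ℝ) + 1) / (i : ℝ) by positivity)
      have hb' : ((i : ℝ) + 1) / (i : ℝ) - 1 = 1 / (i : ℝ) := by field_simp; ring
      linarith
    have hlog2 : Real.log ((i : ℝ) / ((i : ℝ) + 1)) = -Real.log (((i : ℝ) + 1) / (i : ℝ)) := by
      rw [← Real.log_inv]
      congr 1
      rw [inv_div]
    rw [hlog2]
    have : -(1 / (i : ℝ)) ≤ -Real.log (((i : ℝ) + 1) / (i : ℝ)) := by linarith
    calc -(qbar / (i : ℝ)) = qbar * (-(1 / (i : ℝ))) := by ring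
    _ ≤ qbar * (-Real.log (((i : ℝ) + 1) / (i : ℝ))) := by
        exact mul_le_mul_of_nonneg_left this hq.le
    _ = -Real.log (((i : ℝ) + 1) / (i : ℝ)) * qbar := by ring
  linarith

private lemma telescope {M : ℕ} (hM : 1 ≤ M) :
    ∀ N : ℕ, M ≤ N → ∏ j ∈ Finset.Ioc M N, (((j : ℝ) - 1) / (j : ℝ)) = (M : ℝ) / (N : ℝ) := by
  intro N hN
  induction N, hN using Nat.le_induction with
  | base =>
      rw [Finset.Ioc_self, Finset.prod_empty]
      have : (0:ℝ) < (M : ℝ) := by exact_mod_cast hM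
      rw [div_self this.ne']
  | succ N hMN ih =>
      rw [Finset.prod_Ioc_succ_top hMN, ih]
      have hN0 : (0:ℝ) < (N : ℝ) := by
        have : 1 ≤ N := le_trans hM hMN
        exact_mod_cast this
      have hN1 : ((N:ℝ) + 1) ≠ 0 := by positivity
      push_cast
      field_simp
      ring

end Aux

open Filter Topology in

/-- **Lemma.** For `p > 1` and `0 < q̄ < q̄₁ := sup_{b>0} [(p−1)/(b^{p−1}+1) + b/(b+1)]`
there exist `b > 0`, `b ≠ 1`, and `C > 0` such that `Γ_N := ∏_{j=2}^N γ_j ≤ C·N^{−q̄}`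
for all `N ≥ 2` (here `γ_j = γ_{(j−1)+1}` is the coefficient `gammaCoef p b (j−1)`). -/
theorem gamma_product_decay (p qbar : ℝ) (hp : 1 < p) (hq : 0 < qbar)
    (hq' : qbar < sSup {q : ℝ | ∃ b : ℝ, 0 < b ∧
      q = (p - 1) / (b ^ (p - 1) + 1) + b / (b + 1)}) :
    ∃ b : ℝ, 0 < b ∧ b ≠ 1 ∧ ∃ C : ℝ, 0 < C ∧
      ∀ N : ℕ, 2 ≤ N →
        (∏ j ∈ Finset.Icc 2 N, gammaCoef p b (j - 1)) ≤ C * (N : ℝ) ^ (-qbar) := by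
  classical
  set f : ℝ → ℝ := fun b => (p - 1) / (b ^ (p - 1) + 1) + b / (b + 1) with hf
  -- Step 1: find b > 0, b ≠ 1, with qbar < f b.
  obtain ⟨b, hb0, hb1, hblt⟩ : ∃ b : ℝ, 0 < b ∧ b ≠ 1 ∧ qbar < f b := by
    have hne : ({q : ℝ | ∃ b : ℝ, 0 < b ∧ q = f b}).Nonempty := ⟨f 1, 1, one_pos, rfl⟩
    obtain ⟨q, ⟨b₀, hb₀, rfl⟩, hlt⟩ := exists_lt_of_lt_csSup hne hq'
    by_cases hb1 : b₀ = 1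
    · -- perturb b₀ = 1 using continuity of f at 1
      subst hb1
      have hc : ContinuousAt f 1 := by
        apply ContinuousAt.add
        · apply ContinuousAt.div continuousAt_const
          · exact (Real.continuousAt_rpow_const 1 (p - 1) (Or.inl one_ne_zero)).add
              continuousAt_const
          · norm_num [Real.one_rpow]
        · apply ContinuousAt.div continuousAt_id (continuousAt_id.add continuousAt_const)
          norm_num
      have hev : ∀ᶠ x in 𝓝 (1:ℝ), qbar < f x := hc.tendsto.eventually (eventually_gt_nhds hlt)
      have hev' : ∀ᶠ x in 𝓝[>] (1:ℝ), qbar < f x := hev.filter_mono nhdsWithin_le_nhds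
      obtain ⟨x, hx1, hxq⟩ := (eventually_mem_nhdsWithin.and hev').exists
      exact ⟨x, lt_trans one_pos hx1, ne_of_gt hx1, hxq⟩
    · exact ⟨b₀, hb₀, hb1, hlt⟩
  -- Step 2: eventual bound on i * (α + β)
  have htend := tendsto_mul_sum hp hb0
  have hev : ∀ᶠ i : ℕ in Filter.atTop, qbar ≤ (i : ℝ) * (alphaCoef p b i + betaCoef p b i) :=
    htend.eventually (eventually_ge_nhds hblt)
  obtain ⟨i₀, hi₀⟩ := Filter.eventually_atTop.1 hev
  set M : ℕ := max i₀ 2 with hM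
  have hM2 : 2 ≤ M := le_max_right _ _
  have hM0 : (0:ℝ) < (M : ℝ) := by positivity
  refine ⟨b, hb0, hb1, (M : ℝ) ^ qbar, Real.rpow_pos_of_pos hM0 qbar, ?_⟩
  intro N hN
  have hN0 : (0:ℝ) < (N : ℝ) := by
    have : (0:ℕ) < N := by omega
    exact_mod_cast this
  -- basic facts about factors
  have hfac_nonneg : ∀ j ∈ Finset.Icc 2 N, 0 ≤ gammaCoef p b (j - 1) := by
    intro j hj
    rw [Finset.mem_Icc] at hj
    exact (gamma_pos hp hb0 (i := j - 1) (by omega)).le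
  have hfac_le_one : ∀ j ∈ Finset.Icc 2 N, gammaCoef p b (j - 1) ≤ 1 :=
    fun j _ => gamma_le_one hp hb0 _
  rcases le_or_gt N M with hNM | hMN
  · -- small N : product ≤ 1 ≤ C N^{-qbar}
    have h1 : (∏ j ∈ Finset.Icc 2 N, gammaCoef p b (j - 1)) ≤ 1 :=
      Finset.prod_le_one hfac_nonneg hfac_le_one
    have h2 : (1:ℝ) ≤ (M : ℝ) ^ qbar * (N : ℝ) ^ (-qbar) := by
      rw [Real.rpow_neg hN0.le, ← div_eq_mul_inv, le_div_iff₀ (Real.rpow_pos_of_pos hN0 qbar),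
        one_mul]
      exact Real.rpow_le_rpow hN0.le (by exact_mod_cast hNM) hq.le
    linarith
  · -- large N : split the product at M
    have hsplit : (∏ j ∈ Finset.Icc 2 N, gammaCoef p b (j - 1)) =
        (∏ j ∈ Finset.Ioc 1 M, gammaCoef p b (j - 1)) *
          ∏ j ∈ Finset.Ioc M N, gammaCoef p b (j - 1) := by
      rw [show (2:ℕ) = 1 + 1 from rfl, Finset.Icc_add_one_left_eq_Ioc]
      exact (Finset.prod_Ioc_consecutive _ (by omega) hMN.le).symm
    rw [hsplit]
    have hhead_le : (∏ j ∈ Finset.Ioc 1 M, gammaCoef p b (j - 1)) ≤ 1 := by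
      apply Finset.prod_le_one
      · intro j hj
        rw [Finset.mem_Ioc] at hj
        exact (gamma_pos hp hb0 (i := j - 1) (by omega)).le
      · intro j _; exact gamma_le_one hp hb0 _
    have hhead_nonneg : 0 ≤ ∏ j ∈ Finset.Ioc 1 M, gammaCoef p b (j - 1) := by
      apply Finset.prod_nonneg
      intro j hj
      rw [Finset.mem_Ioc] at hj
      exact (gamma_pos hp hb0 (i := j - 1) (by omega)).le
    have htail_nonneg : 0 ≤ ∏ j ∈ Finset.Ioc M N, gammaCoef p b (j - 1) := by
      apply Finset.prod_nonneg
      intro j hj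
      rw [Finset.mem_Ioc] at hj
      exact (gamma_pos hp hb0 (i := j - 1) (by omega)).le
    have htail_le : (∏ j ∈ Finset.Ioc M N, gammaCoef p b (j - 1)) ≤
        ∏ j ∈ Finset.Ioc M N, (((j : ℝ) - 1) / (j : ℝ)) ^ qbar := by
      apply Finset.prod_le_prod
      · intro j hj
        rw [Finset.mem_Ioc] at hj
        exact (gamma_pos hp hb0 (i := j - 1) (by omega)).le
      · intro j hj
        rw [Finset.mem_Ioc] at hj
        have hj1 : 1 ≤ j - 1 := by omega
        have hji : i₀ ≤ j - 1 := by
          have : i₀ ≤ M := le_max_left _ _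
          omega
        have hcast : ((j - 1 : ℕ) : ℝ) = (j : ℝ) - 1 := by
          have : 1 ≤ j := by omega
          push_cast [this]
          ring
        have := gamma_rpow_bound hp hb0 hq hj1 (hi₀ _ hji)
        rw [hcast] at this
        rw [show ((j : ℝ) - 1 + 1) = (j : ℝ) by ring] at this
        exact this
    have htelprod : (∏ j ∈ Finset.Ioc M N, (((j : ℝ) - 1) / (j : ℝ)) ^ qbar) =
        ((M : ℝ) / (N : ℝ)) ^ qbar := by
      rw [Real.finset_prod_rpow _ _ ?_ qbar]
      · rw [telescope (by omega) N hMN.le]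
      · intro j hj
        rw [Finset.mem_Ioc] at hj
        have : (1:ℝ) ≤ (j : ℝ) := by
          have : 1 ≤ j := by omega
          exact_mod_cast this
        have hj0 : (0:ℝ) < (j : ℝ) := by linarith
        apply div_nonneg (by linarith) hj0.le
    have hfinal : ((M : ℝ) / (N : ℝ)) ^ qbar = (M : ℝ) ^ qbar * (N : ℝ) ^ (-qbar) := by
      rw [Real.div_rpow hM0.le hN0.le, Real.rpow_neg hN0.le, div_eq_mul_inv]
    calc (∏ j ∈ Finset.Ioc 1 M, gammaCoef p b (j - 1)) *
          ∏ j ∈ Finset.Ioc M N, gammaCoef p b (j - 1)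
        ≤ 1 * ∏ j ∈ Finset.Ioc M N, (((j : ℝ) - 1) / (j : ℝ)) ^ qbar := by
          apply mul_le_mul hhead_le htail_le htail_nonneg zero_le_one
      _ = (M : ℝ) ^ qbar * (N : ℝ) ^ (-qbar) := by rw [one_mul, htelprod, hfinal]
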